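/- Let T > 0 and f : [0,T] → ℝ be continuous and positive, with L = max_{[0,T]} f. Let g ∈ C¹((0,L]) with g'(a) ≥ θ for all a ∈ (0,L], where θ ≥ 0. Then e^T ∫_0^T f(x) e^{−x} (∫_0^x g(f(y)) e^y dy) dx + ∫_0^T f(x) e^{−x} (∫_x^T g(f(y)) e^y dy) dx ≤ (e^T − 1) ∫_0^T f(x) g(f(x)) dx − (θ/2) ∫_0^T ∫_0^T |f(x) − f(y)|² dx dy. -/

import Mathlib

open MeasureTheory intervalIntegral Real Set

noncomputable def sig (T s x : ℝ) : ℝ := if x + s ≤ T then x + s else x + s - T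

lemma sig_comm (T s x : ℝ) : sig T s x = sig T x s := by
  simp [sig, add_comm]

lemma substA (T : ℝ) (k h : ℝ → ℝ) (hk : Continuous k) (hh : Continuous h)
    (x : ℝ) (hx : x ∈ Set.Icc 0 T) :
    IntegrableOn (fun s => k s * h (sig T s x)) (Set.Ioc 0 T) ∧
    ∫ s in Set.Ioc 0 T, k s * h (sig T s x) =
      (∫ y in x..T, k (y - x) * h y) + ∫ y in (0:ℝ)..x, k (y + T - x) * h y := by
  obtain ⟨hx0, hxT⟩ := hx
  have hc0 : (0:ℝ) ≤ T - x := by linarith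
  have hcT : T - x ≤ T := by linarith
  have hsplit : Set.Ioc (0:ℝ) T = Set.Ioc 0 (T-x) ∪ Set.Ioc (T-x) T :=
    (Set.Ioc_union_Ioc_eq_Ioc hc0 hcT).symm
  have e1 : Set.EqOn (fun s => k s * h (sig T s x)) (fun s => k s * h (x + s)) (Set.Ioc 0 (T-x)) := by
    intro s hs
    simp only [sig]
    rw [if_pos (by linarith [hs.2] : x + s ≤ T)]
  have e2 : Set.EqOn (fun s => k s * h (sig T s x)) (fun s => k s * h (x + s - T)) (Set.Ioc (T-x) T) := by
    intro s hs
    simp only [sig]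
    rw [if_neg (by linarith [hs.1] : ¬ x + s ≤ T)]
  have c1 : Continuous fun s => k s * h (x + s) :=
    hk.mul (hh.comp (continuous_const.add continuous_id))
  have c2 : Continuous fun s => k s * h (x + s - T) :=
    hk.mul (hh.comp ((continuous_const.add continuous_id).sub continuous_const))
  have i1 : IntegrableOn (fun s => k s * h (sig T s x)) (Set.Ioc 0 (T-x)) :=
    (integrableOn_congr_fun e1 measurableSet_Ioc).mpr c1.integrableOn_Ioc
  have i2 : IntegrableOn (fun s => k s * h (sig T s x)) (Set.Ioc (T-x) T) :=
    (integrableOn_congr_fun e2 measurableSet_Ioc).mpr c2.integrableOn_Ioc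
  constructor
  · rw [hsplit]; exact i1.union i2
  rw [hsplit, setIntegral_union (Set.Ioc_disjoint_Ioc_of_le le_rfl) measurableSet_Ioc i1 i2]
  have p1 : ∫ s in Set.Ioc 0 (T-x), k s * h (sig T s x) = ∫ y in x..T, k (y - x) * h y := by
    rw [setIntegral_congr_fun measurableSet_Ioc e1, ← intervalIntegral.integral_of_le hc0]
    have : (fun s => k s * h (x + s)) = fun s => (fun y => k (y - x) * h y) (s + x) := by
      funext s; simp [add_comm, add_sub_cancel_right]
    rw [this, intervalIntegral.integral_comp_add_right (fun y => k (y - x) * h y) x]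
    norm_num
  have p2 : ∫ s in Set.Ioc (T-x) T, k s * h (sig T s x) = ∫ y in (0:ℝ)..x, k (y + T - x) * h y := by
    rw [setIntegral_congr_fun measurableSet_Ioc e2, ← intervalIntegral.integral_of_le hcT]
    have : (fun s => k s * h (x + s - T)) = fun s => (fun y => k (y + T - x) * h y) (s + (x - T)) := by
      funext s; ring_nf
    rw [this, intervalIntegral.integral_comp_add_right (fun y => k (y + T - x) * h y) (x - T)]
    have h1 : T - x + (x - T) = 0 := by ring
    have h2 : T + (x - T) = x := by ring
    rw [h1, h2]
  rw [p1, p2]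

lemma sig_meas (T : ℝ) : Measurable (fun z : ℝ × ℝ => sig T z.2 z.1) := by
  unfold sig
  exact Measurable.ite (measurableSet_le (measurable_fst.add measurable_snd) measurable_const)
    (measurable_fst.add measurable_snd) ((measurable_fst.add measurable_snd).sub measurable_const)

lemma sig_meas_left (T s : ℝ) : Measurable (fun x : ℝ => sig T s x) :=
  (sig_meas T).comp (measurable_id.prodMk measurable_const)

lemma intOn_bdd {S : Set ℝ} (hS : MeasurableSet S) (hfin : volume S < ⊤) {f : ℝ → ℝ}
    (hm : Measurable f) (C : ℝ) (hbd : ∀ x ∈ S, |f x| ≤ C) : IntegrableOn f S := by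
  haveI := Fact.mk hfin
  refine Integrable.mono' (integrable_const C) hm.aestronglyMeasurable.restrict ?_
  rw [ae_restrict_iff' hS]
  exact Filter.Eventually.of_forall fun x hx => by simpa using hbd x hx

-- substB: integrate over x with s fixed
lemma substB (T : ℝ) (h : ℝ → ℝ) (hh : Continuous h) (s : ℝ) (hs : s ∈ Set.Icc 0 T) :
    ∫ x in Set.Ioc 0 T, h (sig T s x) = ∫ x in Set.Ioc 0 T, h x := by
  have h0 := (substA T (fun _ => (1:ℝ)) h continuous_const hh s hs).2
  have heq : ∀ τ : ℝ, (1:ℝ) * h (sig T τ s) = h (sig T s τ) := fun τ => by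
    rw [one_mul, sig_comm]
  calc ∫ x in Set.Ioc 0 T, h (sig T s x)
      = ∫ x in Set.Ioc 0 T, (1:ℝ) * h (sig T x s) := by
        refine setIntegral_congr_fun measurableSet_Ioc fun x _ => ?_
        rw [heq]
    _ = (∫ y in s..T, (1:ℝ) * h y) + ∫ y in (0:ℝ)..s, (1:ℝ) * h y := h0
    _ = (∫ y in (0:ℝ)..s, h y) + ∫ y in s..T, h y := by simp [add_comm]
    _ = ∫ y in (0:ℝ)..T, h y := integral_add_adjacent_intervals
        (hh.intervalIntegrable _ _) (hh.intervalIntegrable _ _)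
    _ = ∫ x in Set.Ioc 0 T, h x := intervalIntegral.integral_of_le (hs.1.trans hs.2)

-- stepA: kernel identity per x
lemma stepA (T : ℝ) (c : ℝ) (v : ℝ → ℝ) (hv : Continuous v) (x : ℝ) (hx : x ∈ Set.Icc 0 T) :
    ∫ s in Set.Ioc 0 T, Real.exp s * (c * v (sig T s x)) =
      Real.exp T * (c * Real.exp (-x) * ∫ y in (0:ℝ)..x, v y * Real.exp y)
      + c * Real.exp (-x) * ∫ y in x..T, v y * Real.exp y := by
  have h0 := (substA T Real.exp (fun y => c * v y) Real.continuous_exp (continuous_const.mul hv) x hx).2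
  rw [h0]
  have p1 : ∫ y in x..T, Real.exp (y - x) * (c * v y)
      = c * Real.exp (-x) * ∫ y in x..T, v y * Real.exp y := by
    rw [← intervalIntegral.integral_const_mul]
    refine intervalIntegral.integral_congr fun y _ => ?_
    rw [sub_eq_add_neg, Real.exp_add]; ring
  have p2 : ∫ y in (0:ℝ)..x, Real.exp (y + T - x) * (c * v y)
      = Real.exp T * (c * Real.exp (-x) * ∫ y in (0:ℝ)..x, v y * Real.exp y) := by
    rw [← intervalIntegral.integral_const_mul, ← intervalIntegral.integral_const_mul]
    refine intervalIntegral.integral_congr fun y _ => ?_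
    have : y + T - x = T + (-x) + y := by ring
    rw [this, Real.exp_add, Real.exp_add]; ring
  rw [p1, p2]; ring

-- integral of exp over Ioc
lemma exp_ioc (T : ℝ) (hT : 0 ≤ T) (c : ℝ) :
    ∫ s in Set.Ioc 0 T, Real.exp s * c = (Real.exp T - 1) * c := by
  rw [← intervalIntegral.integral_of_le hT]
  have : ∀ s, Real.exp s * c = c * Real.exp s := fun s => mul_comm _ _
  simp_rw [this]
  rw [intervalIntegral.integral_const_mul, integral_exp]
  simp [mul_comm]

-- product integrability on the box
lemma int_box (T : ℝ) (F : ℝ × ℝ → ℝ) (hm : Measurable F) (C : ℝ)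
    (hbd : ∀ z ∈ Set.Ioc (0:ℝ) T ×ˢ Set.Ioc (0:ℝ) T, |F z| ≤ C) :
    Integrable F ((volume.restrict (Set.Ioc 0 T)).prod (volume.restrict (Set.Ioc 0 T))) := by
  rw [Measure.prod_restrict]
  haveI := Fact.mk (show (volume.prod volume) (Set.Ioc (0:ℝ) T ×ˢ Set.Ioc (0:ℝ) T) < ⊤ from by
    rw [Measure.prod_prod]
    exact ENNReal.mul_lt_top measure_Ioc_lt_top measure_Ioc_lt_top)
  refine Integrable.mono' (integrable_const C) hm.aestronglyMeasurable.restrict ?_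
  rw [ae_restrict_iff' (measurableSet_Ioc.prod measurableSet_Ioc)]
  exact Filter.Eventually.of_forall fun z hz => by simpa using hbd z hz

lemma keylemma (ε L θ : ℝ) (hεL : ε ≤ L) (g G : ℝ → ℝ) (hGc : Continuous G)
    (hGθ : ∀ t, θ ≤ G t) (hGg : ∀ t ∈ Set.Icc ε L, HasDerivAt g (G t) t)
    (a b : ℝ) (ha : a ∈ Set.Icc ε L) (hb : b ∈ Set.Icc ε L) :
    (∫ t in (0:ℝ)..a, t * G t) - (∫ t in (0:ℝ)..b, t * G t) + θ / 2 * (a - b) ^ 2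
      ≤ a * (g a - g b) := by
  have hsub : Set.uIcc b a ⊆ Set.Icc ε L := Set.uIcc_subset_Icc hb ha
  have h1 : ∫ t in b..a, G t = g a - g b :=
    intervalIntegral.integral_eq_sub_of_hasDerivAt (fun t ht => hGg t (hsub ht))
      (hGc.intervalIntegrable _ _)
  have h2 : ∫ t in b..a, t * G t
      = (∫ t in (0:ℝ)..a, t * G t) - ∫ t in (0:ℝ)..b, t * G t := by
    have := integral_add_adjacent_intervals
      ((continuous_id'.mul hGc).intervalIntegrable (μ := volume) 0 b)
      ((continuous_id'.mul hGc).intervalIntegrable b a)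
    simp only [Pi.mul_apply] at this
    linarith
  have h3 : a * (g a - g b) - ((∫ t in (0:ℝ)..a, t * G t) - ∫ t in (0:ℝ)..b, t * G t)
      = ∫ t in b..a, (a - t) * G t := by
    rw [← h1, ← h2, ← intervalIntegral.integral_const_mul,
      ← intervalIntegral.integral_sub ((show Continuous fun t => a * G t from continuous_const.mul hGc).intervalIntegrable _ _)
        ((show Continuous fun t => t * G t from continuous_id'.mul hGc).intervalIntegrable _ _)]
    refine intervalIntegral.integral_congr fun t _ => ?_
    ring
  have h4 : θ / 2 * (a - b) ^ 2 ≤ ∫ t in b..a, (a - t) * G t := by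
    rcases le_total b a with hba | hab
    · have hmono : ∫ t in b..a, (a - t) * θ ≤ ∫ t in b..a, (a - t) * G t := by
        refine intervalIntegral.integral_mono_on hba
          (((continuous_const.sub continuous_id).mul continuous_const).intervalIntegrable _ _)
          (((continuous_const.sub continuous_id).mul hGc).intervalIntegrable _ _)
          fun t ht => ?_
        exact mul_le_mul_of_nonneg_left (hGθ t) (by linarith [ht.2])
      have hcalc : ∫ t in b..a, (a - t) * θ = θ / 2 * (a - b) ^ 2 := by
        have e : ∀ t : ℝ, (a - t) * θ = θ * (a - t) := fun t => mul_comm _ _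
        simp_rw [e]
        rw [intervalIntegral.integral_const_mul,
          intervalIntegral.integral_sub (intervalIntegrable_const) intervalIntegral.intervalIntegrable_id,
          intervalIntegral.integral_const, integral_id]
        simp only [smul_eq_mul]
        ring
      linarith
    · have hmono : ∫ t in a..b, (a - t) * G t ≤ ∫ t in a..b, (a - t) * θ := by
        refine intervalIntegral.integral_mono_on hab
          (((continuous_const.sub continuous_id).mul hGc).intervalIntegrable _ _)
          (((continuous_const.sub continuous_id).mul continuous_const).intervalIntegrable _ _)
          fun t ht => ?_
        exact mul_le_mul_of_nonpos_left (hGθ t) (by linarith [ht.1])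
      have hcalc : ∫ t in a..b, (a - t) * θ = -(θ / 2 * (a - b) ^ 2) := by
        have e : ∀ t : ℝ, (a - t) * θ = θ * (a - t) := fun t => mul_comm _ _
        simp_rw [e]
        rw [intervalIntegral.integral_const_mul,
          intervalIntegral.integral_sub (intervalIntegrable_const) intervalIntegral.intervalIntegrable_id,
          intervalIntegral.integral_const, integral_id]
        simp only [smul_eq_mul]
        ring
      have hflip : ∫ t in b..a, (a - t) * G t = -∫ t in a..b, (a - t) * G t :=
        intervalIntegral.integral_symm a b
      linarith
  linarith

lemma core (T : ℝ) (hT : 0 < T) (u v w : ℝ → ℝ)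
    (hu : Continuous u) (hv : Continuous v) (hw : Continuous w)
    (Mu Mv Mw : ℝ) (hMu : ∀ x, |u x| ≤ Mu) (hMv : ∀ x, |v x| ≤ Mv) (hMw : ∀ x, |w x| ≤ Mw)
    (θ : ℝ) (hθ : 0 ≤ θ)
    (key : ∀ x y : ℝ, w x - w y + θ/2 * (u x - u y)^2 ≤ u x * (v x - v y)) :
    Real.exp T * (∫ x in (0:ℝ)..T, u x * Real.exp (-x) * ∫ y in (0:ℝ)..x, v y * Real.exp y) +
      (∫ x in (0:ℝ)..T, u x * Real.exp (-x) * ∫ y in x..T, v y * Real.exp y) ≤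
    (Real.exp T - 1) * (∫ x in (0:ℝ)..T, u x * v x) -
      θ / 2 * (∫ x in (0:ℝ)..T, ∫ y in (0:ℝ)..T, (u x - u y) ^ 2) := by
  have hT0 : (0:ℝ) ≤ T := hT.le
  have hMu0 : 0 ≤ Mu := (abs_nonneg _).trans (hMu 0)
  have hMv0 : 0 ≤ Mv := (abs_nonneg _).trans (hMv 0)
  have hIcc : Set.uIcc (0:ℝ) T = Set.Icc 0 T := Set.uIcc_of_le hT0
  set I : Set ℝ := Set.Ioc (0:ℝ) T with hIdef
  have hIsub : I ⊆ Set.Icc 0 T := Set.Ioc_subset_Icc_self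
  -- abbreviations
  set P : ℝ → ℝ → ℝ := fun x s => Real.exp s * (u x * v x - u x * v (sig T s x)) with hPdef
  set Q : ℝ → ℝ → ℝ := fun x s => (u x - u (sig T s x)) ^ 2 with hQdef
  -- measurability
  have hum : Measurable u := hu.measurable
  have hvm : Measurable v := hv.measurable
  have hPm : Measurable (Function.uncurry P) := by
    apply Measurable.mul
    · exact Real.continuous_exp.measurable.comp measurable_snd
    · exact ((hum.comp measurable_fst).mul (hvm.comp measurable_fst)).sub
        ((hum.comp measurable_fst).mul (hvm.comp (sig_meas T)))
  have hQm : Measurable (Function.uncurry Q) :=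
    ((hum.comp measurable_fst).sub (hum.comp (sig_meas T))).pow_const 2
  -- bounds
  have habs2 : ∀ a b : ℝ, |u a * v a - u a * v b| ≤ Mu * Mv + Mu * Mv := by
    intro a b
    refine (abs_sub _ _).trans (add_le_add ?_ ?_) <;>
      · rw [abs_mul]
        exact mul_le_mul (hMu _) (hMv _) (abs_nonneg _) hMu0
  have hPbd : ∀ z ∈ I ×ˢ I, |Function.uncurry P z| ≤ Real.exp T * (Mu * Mv + Mu * Mv) := by
    rintro ⟨x, s⟩ ⟨_, hs⟩
    have h1 : |Real.exp s| ≤ Real.exp T := by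
      rw [abs_of_pos (Real.exp_pos s)]
      exact Real.exp_le_exp.2 hs.2
    calc |Function.uncurry P (x, s)| = |Real.exp s| * |u x * v x - u x * v (sig T s x)| := by
          simp [Function.uncurry, hPdef, abs_mul]
      _ ≤ Real.exp T * (Mu * Mv + Mu * Mv) :=
          mul_le_mul h1 (habs2 _ _) (abs_nonneg _) (Real.exp_pos T).le
  have hQbd : ∀ z ∈ I ×ˢ I, |Function.uncurry Q z| ≤ (Mu + Mu) ^ 2 := by
    rintro ⟨x, s⟩ _
    have h1 := abs_le.1 (hMu x)
    have h2 := abs_le.1 (hMu (sig T s x))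
    have e : Function.uncurry Q (x, s) = (u x - u (sig T s x)) ^ 2 := rfl
    rw [e, abs_of_nonneg (sq_nonneg (u x - u (sig T s x)))]
    nlinarith [h1.1, h1.2, h2.1, h2.2]
  have hPint : Integrable (Function.uncurry P) ((volume.restrict I).prod (volume.restrict I)) :=
    int_box T _ hPm _ hPbd
  have hQint : Integrable (Function.uncurry Q) ((volume.restrict I).prod (volume.restrict I)) :=
    int_box T _ hQm _ hQbd
  -- slice inequality
  have slice : ∀ s ∈ I, θ / 2 * (∫ x in I, Q x s) ≤ ∫ x in I, P x s := by
    intro s hs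
    have hsIcc : s ∈ Set.Icc 0 T := hIsub hs
    have msx : Measurable fun x => sig T s x := sig_meas_left T s
    have hfin : volume I < ⊤ := measure_Ioc_lt_top
    have hUV : IntegrableOn (fun x => u x * v x - u x * v (sig T s x)) I :=
      intOn_bdd measurableSet_Ioc hfin
        ((hum.mul hvm).sub (hum.mul (hvm.comp msx))) (Mu * Mv + Mu * Mv)
        (fun x _ => habs2 _ _)
    have hWσ : IntegrableOn (fun x => w (sig T s x)) I :=
      intOn_bdd measurableSet_Ioc hfin (hw.measurable.comp msx) Mw (fun x _ => hMw _)
    have hWI : IntegrableOn w I := hw.integrableOn_Ioc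
    have hQx : IntegrableOn (fun x => Q x s) I := by
      refine intOn_bdd measurableSet_Ioc hfin ((hum.sub (hum.comp msx)).pow_const 2)
        ((Mu + Mu) ^ 2) fun x _ => ?_
      have h1 := abs_le.1 (hMu x)
      have h2 := abs_le.1 (hMu (sig T s x))
      have e : Q x s = (u x - u (sig T s x)) ^ 2 := rfl
      rw [e, abs_of_nonneg (sq_nonneg _)]
      nlinarith [h1.1, h1.2, h2.1, h2.2]
    have hKey : ∀ x ∈ I, (w x - w (sig T s x)) + θ / 2 * Q x s
        ≤ u x * v x - u x * v (sig T s x) := by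
      intro x _
      have := key x (sig T s x)
      rw [mul_sub] at this
      simpa [hQdef] using this
    have hWdiff : IntegrableOn (fun x => w x - w (sig T s x)) I := hWI.sub hWσ
    have hQc : IntegrableOn (fun x => θ / 2 * Q x s) I := hQx.const_mul _
    have hsum : IntegrableOn (fun x => (w x - w (sig T s x)) + θ / 2 * Q x s) I :=
      hWdiff.add hQc
    have mono := setIntegral_mono_on hsum hUV measurableSet_Ioc hKey
    have hW0 : ∫ x in I, (w x - w (sig T s x)) = 0 := by
      rw [integral_sub hWI hWσ, substB T w hw s hsIcc, sub_self]
    have hsplit : ∫ x in I, ((w x - w (sig T s x)) + θ / 2 * Q x s)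
        = θ / 2 * ∫ x in I, Q x s := by
      rw [integral_add hWdiff hQc, hW0, zero_add, MeasureTheory.integral_const_mul]
    rw [hsplit] at mono
    have hD0 : 0 ≤ ∫ x in I, Q x s := setIntegral_nonneg measurableSet_Ioc fun x _ => sq_nonneg _
    have hC0 : 0 ≤ ∫ x in I, (u x * v x - u x * v (sig T s x)) :=
      le_trans (mul_nonneg (by linarith) hD0) mono
    have hPs : ∫ x in I, P x s
        = Real.exp s * ∫ x in I, (u x * v x - u x * v (sig T s x)) :=
      MeasureTheory.integral_const_mul _ _
    calc θ / 2 * (∫ x in I, Q x s) ≤ ∫ x in I, (u x * v x - u x * v (sig T s x)) := mono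
      _ ≤ Real.exp s * ∫ x in I, (u x * v x - u x * v (sig T s x)) :=
          le_mul_of_one_le_left hC0 (Real.one_le_exp hs.1.le)
      _ = ∫ x in I, P x s := hPs.symm
  -- Fubini swaps
  have swapP : ∫ x in I, ∫ s in I, P x s = ∫ s in I, ∫ x in I, P x s :=
    MeasureTheory.integral_integral_swap hPint
  have swapQ : ∫ x in I, ∫ s in I, Q x s = ∫ s in I, ∫ x in I, Q x s :=
    MeasureTheory.integral_integral_swap hQint
  -- slice integrabilities in s
  have hPs_int : Integrable (fun s => ∫ x in I, P x s) (volume.restrict I) := by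
    have := hPint.integral_prod_right
    simpa [Function.uncurry] using this
  have hQs_int : Integrable (fun s => ∫ x in I, Q x s) (volume.restrict I) := by
    have := hQint.integral_prod_right
    simpa [Function.uncurry] using this
  -- integrate slice inequality
  have main2 : ∫ s in I, (θ / 2 * ∫ x in I, Q x s) ≤ ∫ s in I, ∫ x in I, P x s :=
    setIntegral_mono_on (hQs_int.const_mul _) hPs_int measurableSet_Ioc slice
  have main3 : θ / 2 * (∫ x in I, ∫ s in I, Q x s) ≤ ∫ x in I, ∫ s in I, P x s := by
    rw [swapQ, swapP]
    calc θ / 2 * ∫ s in I, ∫ x in I, Q x s = ∫ s in I, (θ / 2 * ∫ x in I, Q x s) :=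
        (MeasureTheory.integral_const_mul _ _).symm
      _ ≤ _ := main2
  -- outer identities
  have hve : Continuous fun y => v y * Real.exp y := hv.mul Real.continuous_exp
  have hprim : Continuous fun x => ∫ y in (0:ℝ)..x, v y * Real.exp y :=
    intervalIntegral.continuous_primitive (fun a b => hve.intervalIntegrable a b) 0
  have htail : (fun x => ∫ y in x..T, v y * Real.exp y)
      = fun x => (∫ y in (0:ℝ)..T, v y * Real.exp y) - ∫ y in (0:ℝ)..x, v y * Real.exp y := by
    funext x
    rw [eq_sub_iff_add_eq, add_comm]
    exact integral_add_adjacent_intervals (hve.intervalIntegrable _ _) (hve.intervalIntegrable _ _)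
  have hcont2 : Continuous fun x => ∫ y in x..T, v y * Real.exp y := by
    rw [htail]; exact continuous_const.sub hprim
  have cg1 : Continuous fun x => u x * Real.exp (-x) * ∫ y in (0:ℝ)..x, v y * Real.exp y :=
    (hu.mul (Real.continuous_exp.comp continuous_neg)).mul hprim
  have cg2 : Continuous fun x => u x * Real.exp (-x) * ∫ y in x..T, v y * Real.exp y :=
    (hu.mul (Real.continuous_exp.comp continuous_neg)).mul hcont2
  have idA : Real.exp T * (∫ x in (0:ℝ)..T, u x * Real.exp (-x) * ∫ y in (0:ℝ)..x, v y * Real.exp y) +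
      (∫ x in (0:ℝ)..T, u x * Real.exp (-x) * ∫ y in x..T, v y * Real.exp y)
      = ∫ x in I, ∫ s in I, Real.exp s * (u x * v (sig T s x)) := by
    rw [← intervalIntegral.integral_const_mul,
      ← intervalIntegral.integral_add ((show Continuous fun x => Real.exp T * (u x * Real.exp (-x) * ∫ y in (0:ℝ)..x, v y * Real.exp y) from continuous_const.mul cg1).intervalIntegrable _ _)
        (cg2.intervalIntegrable _ _),
      intervalIntegral.integral_of_le hT0]
    refine setIntegral_congr_fun measurableSet_Ioc fun x hx => ?_
    exact (stepA T (u x) v hv x (hIsub hx)).symm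
  have idB : (Real.exp T - 1) * (∫ x in (0:ℝ)..T, u x * v x)
      = ∫ x in I, ∫ s in I, Real.exp s * (u x * v x) := by
    rw [← intervalIntegral.integral_const_mul, intervalIntegral.integral_of_le hT0]
    refine setIntegral_congr_fun measurableSet_Ioc fun x hx => ?_
    exact (exp_ioc T hT0 (u x * v x)).symm
  have idQ : (∫ x in (0:ℝ)..T, ∫ y in (0:ℝ)..T, (u x - u y) ^ 2)
      = ∫ x in I, ∫ s in I, Q x s := by
    rw [intervalIntegral.integral_of_le hT0]
    refine setIntegral_congr_fun measurableSet_Ioc fun x hx => ?_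
    have hcsq : Continuous fun y => (u x - u y) ^ 2 := (continuous_const.sub hu).pow 2
    have h := (substA T (fun _ => (1:ℝ)) (fun y => (u x - u y) ^ 2) continuous_const hcsq
      x (hIsub hx)).2
    calc ∫ y in (0:ℝ)..T, (u x - u y) ^ 2
        = (∫ y in (0:ℝ)..x, (u x - u y) ^ 2) + ∫ y in x..T, (u x - u y) ^ 2 :=
          (integral_add_adjacent_intervals (hcsq.intervalIntegrable _ _)
            (hcsq.intervalIntegrable _ _)).symm
      _ = (∫ y in x..T, (1:ℝ) * (u x - u y) ^ 2) + ∫ y in (0:ℝ)..x, (1:ℝ) * (u x - u y) ^ 2 := by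
          simp [add_comm]
      _ = ∫ s in I, (1:ℝ) * (u x - u (sig T s x)) ^ 2 := h.symm
      _ = ∫ s in I, Q x s := by simp only [hQdef, one_mul]
  have idD : ∫ x in I, ∫ s in I, P x s
      = (∫ x in I, ∫ s in I, Real.exp s * (u x * v x))
        - ∫ x in I, ∫ s in I, Real.exp s * (u x * v (sig T s x)) := by
    have intB : IntegrableOn (fun x => ∫ s in I, Real.exp s * (u x * v x)) I := by
      have e : (fun x => ∫ s in I, Real.exp s * (u x * v x))
          = fun x => (Real.exp T - 1) * (u x * v x) := funext fun x => exp_ioc T hT0 _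
      rw [e]
      exact (continuous_const.mul (hu.mul hv)).integrableOn_Ioc
    have intR : IntegrableOn (fun x => ∫ s in I, Real.exp s * (u x * v (sig T s x))) I := by
      refine (integrableOn_congr_fun (fun x hx => stepA T (u x) v hv x (hIsub hx))
        measurableSet_Ioc).mpr ?_
      exact ((continuous_const.mul cg1).add cg2).integrableOn_Ioc
    rw [← integral_sub intB intR]
    refine setIntegral_congr_fun measurableSet_Ioc fun x hx => ?_
    have int1 : IntegrableOn (fun s => Real.exp s * (u x * v x)) I :=
      (Real.continuous_exp.mul continuous_const).integrableOn_Ioc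
    have int2 : IntegrableOn (fun s => Real.exp s * (u x * v (sig T s x))) I :=
      (substA T Real.exp (fun y => u x * v y) Real.continuous_exp (continuous_const.mul hv)
        x (hIsub hx)).1
    rw [← integral_sub int1 int2]
    refine setIntegral_congr_fun measurableSet_Ioc fun s hs => ?_
    simp only [hPdef]; ring
  have base : θ / 2 * (∫ x in I, ∫ s in I, Q x s)
      ≤ (∫ x in I, ∫ s in I, Real.exp s * (u x * v x))
        - ∫ x in I, ∫ s in I, Real.exp s * (u x * v (sig T s x)) := idD ▸ main3
  rw [idA, idB, idQ]
  linarith [base]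

theorem continuous_key_inequality_increasing
    (T : ℝ) (hT : 0 < T) (f : ℝ → ℝ)
    (hf : ContinuousOn f (Set.Icc 0 T))
    (hfpos : ∀ x ∈ Set.Icc (0:ℝ) T, 0 < f x)
    (L : ℝ) (hL : IsGreatest (f '' Set.Icc 0 T) L)
    (θ : ℝ) (hθ : 0 ≤ θ)
    (g g' : ℝ → ℝ)
    (hgd : ∀ a ∈ Set.Ioc (0:ℝ) L, HasDerivAt g (g' a) a)
    (hg'c : ContinuousOn g' (Set.Ioc 0 L))
    (hg' : ∀ a ∈ Set.Ioc (0:ℝ) L, θ ≤ g' a) :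
    Real.exp T * (∫ x in (0:ℝ)..T, f x * Real.exp (-x) *
        ∫ y in (0:ℝ)..x, g (f y) * Real.exp y) +
      (∫ x in (0:ℝ)..T, f x * Real.exp (-x) *
        ∫ y in x..T, g (f y) * Real.exp y) ≤
    (Real.exp T - 1) * (∫ x in (0:ℝ)..T, f x * g (f x)) -
      θ / 2 * (∫ x in (0:ℝ)..T, ∫ y in (0:ℝ)..T, |f x - f y| ^ 2) := by
  have hT0 : (0:ℝ) ≤ T := hT.le
  obtain ⟨z, hzmem, hzmin⟩ := isCompact_Icc.exists_isMinOn (Set.nonempty_Icc.2 hT0) hf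
  set ε := f z with hεdef
  have hε0 : 0 < ε := hfpos z hzmem
  have hfL : ∀ x ∈ Set.Icc (0:ℝ) T, f x ≤ L := fun x hx => hL.2 (Set.mem_image_of_mem f hx)
  have hmin : ∀ x ∈ Set.Icc (0:ℝ) T, ε ≤ f x := fun x hx => hzmin hx
  have hεL : ε ≤ L := hfL z hzmem
  have hIccsub : Set.Icc ε L ⊆ Set.Ioc 0 L := fun t ht => ⟨hε0.trans_le ht.1, ht.2⟩
  -- clamp to [0,T]
  set cl : ℝ → ℝ := fun x => max 0 (min x T) with hcldef
  have hclcont : Continuous cl := continuous_const.max (continuous_id.min continuous_const)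
  have hclmem : ∀ x, cl x ∈ Set.Icc (0:ℝ) T :=
    fun x => ⟨le_max_left _ _, max_le hT0 (min_le_right x T)⟩
  have hcl_id : ∀ x ∈ Set.Icc (0:ℝ) T, cl x = x := fun x hx => by
    rw [hcldef]; simp only []; rw [min_eq_left hx.2, max_eq_right hx.1]
  set u : ℝ → ℝ := fun x => f (cl x) with hudef
  have hu : Continuous u := hf.comp_continuous hclcont hclmem
  have humem : ∀ x, u x ∈ Set.Icc ε L := fun x => ⟨hmin _ (hclmem x), hfL _ (hclmem x)⟩
  have huf : ∀ x ∈ Set.Icc (0:ℝ) T, u x = f x := fun x hx => by rw [hudef]; simp only []; rw [hcl_id x hx]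
  -- clamp to [ε,L]
  set clL : ℝ → ℝ := fun t => max ε (min t L) with hclLdef
  have hclLcont : Continuous clL := continuous_const.max (continuous_id.min continuous_const)
  have hclLmem : ∀ t, clL t ∈ Set.Icc ε L :=
    fun t => ⟨le_max_left _ _, max_le hεL (min_le_right t L)⟩
  have hclL_id : ∀ t ∈ Set.Icc ε L, clL t = t := fun t ht => by
    rw [hclLdef]; simp only []; rw [min_eq_left ht.2, max_eq_right ht.1]
  set G : ℝ → ℝ := fun t => g' (clL t) with hGdef
  have hGc : Continuous G :=
    hg'c.comp_continuous hclLcont fun t => hIccsub (hclLmem t)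
  have hGθ : ∀ t, θ ≤ G t := fun t => hg' _ (hIccsub (hclLmem t))
  have hGg : ∀ t ∈ Set.Icc ε L, HasDerivAt g (G t) t := fun t ht => by
    have : G t = g' t := by rw [hGdef]; simp only []; rw [hclL_id t ht]
    rw [this]
    exact hgd t (hIccsub ht)
  -- Φ and composites
  set Φ : ℝ → ℝ := fun a => ∫ t in (0:ℝ)..a, t * G t with hΦdef
  have hΦc : Continuous Φ :=
    intervalIntegral.continuous_primitive
      (fun a b => (continuous_id'.mul hGc).intervalIntegrable a b) 0
  have hgcont : ContinuousOn g (Set.Icc ε L) :=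
    fun t ht => ((hGg t ht).continuousAt).continuousWithinAt
  set v : ℝ → ℝ := fun x => g (u x) with hvdef
  have hv : Continuous v := hgcont.comp_continuous hu humem
  set w : ℝ → ℝ := fun x => Φ (u x) with hwdef
  have hw : Continuous w := hΦc.comp hu
  -- bounds
  have hMu : ∀ x, |u x| ≤ |ε| + |L| := fun x => by
    have h := humem x
    rw [abs_le]
    constructor
    · have := neg_abs_le ε; linarith [h.1, abs_nonneg L]
    · have := le_abs_self L; linarith [h.2, abs_nonneg ε]
  obtain ⟨Mg, hMg⟩ := isCompact_Icc.exists_bound_of_continuousOn hgcont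
  have hMv : ∀ x, |v x| ≤ Mg := fun x => hMg _ (humem x)
  obtain ⟨MΦ, hMΦ⟩ := isCompact_Icc.exists_bound_of_continuousOn hΦc.continuousOn
  have hMw : ∀ x, |w x| ≤ MΦ := fun x => hMΦ _ (humem x)
  -- pointwise key
  have key : ∀ x y : ℝ, w x - w y + θ/2 * (u x - u y)^2 ≤ u x * (v x - v y) := fun x y =>
    keylemma ε L θ hεL g G hGc hGθ hGg (u x) (u y) (humem x) (humem y)
  have CORE := core T hT u v w hu hv hw _ _ _ hMu hMv hMw θ hθ key
  -- transfer
  have hIcc : Set.uIcc (0:ℝ) T = Set.Icc 0 T := Set.uIcc_of_le hT0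
  have hvf : ∀ y ∈ Set.Icc (0:ℝ) T, g (f y) = v y := fun y hy => by
    rw [hvdef]; simp only []; rw [huf y hy]
  have e1 : (∫ x in (0:ℝ)..T, f x * Real.exp (-x) * ∫ y in (0:ℝ)..x, g (f y) * Real.exp y)
      = ∫ x in (0:ℝ)..T, u x * Real.exp (-x) * ∫ y in (0:ℝ)..x, v y * Real.exp y := by
    refine intervalIntegral.integral_congr fun x hx => ?_
    rw [hIcc] at hx
    have hxsub : Set.uIcc (0:ℝ) x ⊆ Set.Icc (0:ℝ) T := by
      rw [Set.uIcc_of_le hx.1]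
      exact Set.Icc_subset_Icc le_rfl hx.2
    rw [huf x hx]
    congr 1
    refine intervalIntegral.integral_congr fun y hy => ?_
    rw [hvf y (hxsub hy)]
  have e2 : (∫ x in (0:ℝ)..T, f x * Real.exp (-x) * ∫ y in x..T, g (f y) * Real.exp y)
      = ∫ x in (0:ℝ)..T, u x * Real.exp (-x) * ∫ y in x..T, v y * Real.exp y := by
    refine intervalIntegral.integral_congr fun x hx => ?_
    rw [hIcc] at hx
    have hxsub : Set.uIcc x T ⊆ Set.Icc (0:ℝ) T := by
      rw [Set.uIcc_of_le hx.2]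
      exact Set.Icc_subset_Icc hx.1 le_rfl
    rw [huf x hx]
    congr 1
    refine intervalIntegral.integral_congr fun y hy => ?_
    rw [hvf y (hxsub hy)]
  have e3 : (∫ x in (0:ℝ)..T, f x * g (f x)) = ∫ x in (0:ℝ)..T, u x * v x := by
    refine intervalIntegral.integral_congr fun x hx => ?_
    rw [hIcc] at hx
    rw [huf x hx, hvf x hx]
  have e4 : (∫ x in (0:ℝ)..T, ∫ y in (0:ℝ)..T, |f x - f y| ^ 2)
      = ∫ x in (0:ℝ)..T, ∫ y in (0:ℝ)..T, (u x - u y) ^ 2 := by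
    refine intervalIntegral.integral_congr fun x hx => ?_
    rw [hIcc] at hx
    refine intervalIntegral.integral_congr fun y hy => ?_
    rw [hIcc] at hy
    rw [sq_abs, huf x hx, huf y hy]
  rw [e1, e2, e3, e4]
  exact CORE
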